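/- Let (Ω,𝓕,P) be a probability space, Xᵢ : Ω → Ωᵢ (i = 1,2,3) measurable maps into measurable spaces, and φ : ℝ → ℝ a convex function (φ(t·x + (1−t)·y) ≤ t·φ(x) + (1−t)·φ(y) for all x, y ∈ ℝ and t ∈ [0,1]). Fix a measurable set A₃ ⊆ Ω₃ with P(X₃⁻¹(A₃)) > 0, set ν := (P.restrict (X₃⁻¹(A₃))).map X₁, and suppose K is a finite kernel from Ω₁ to Ω₂ with ∫_{A₁} K(ω₁)(A₂) dν = P(X₁⁻¹(A₁) ∩ X₂⁻¹(A₂) ∩ X₃⁻¹(A₃)) for all measurable A₁, A₂ (a kernel version of P[X₂ | X₁, X₃∈A₃]). Let Y : Ω₂ → ℝ be 𝓕₂-measurable with both Y and φ ∘ Y integrable with respect to P.map X₂. Then for ν-almost every ω₁ ∈ Ω₁, K(ω₁) is a probability measure, Y and φ ∘ Y are K(ω₁)-integrable, and φ(∫_{Ω₂} Y dK(ω₁)) ≤ ∫_{Ω₂} (φ ∘ Y) dK(ω₁). (Paper's Theorem 6.14: Jensen's inequality for the conditional E-integral given co-occurrence of X₁ and X₃∈A₃.) -/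

import Mathlib

open MeasureTheory ProbabilityTheory
open scoped ENNReal

/-- Paper's Theorem 6.14 (Jensen's inequality for the conditional E-integral):
if `φ : ℝ → ℝ` is convex, `K` is a kernel version of `P[X₂ | X₁, X₃ ∈ A₃]`, and `Y`
and `φ ∘ Y` are integrable with respect to the law of `X₂`, then for
`ν = P[X₁, X₃∈A₃]`-a.e. `ω₁` the measure `K ω₁` is a probability measure, `Y` and
`φ ∘ Y` are `K ω₁`-integrable, and `φ(∫ Y d(K ω₁)) ≤ ∫ φ ∘ Y d(K ω₁)`. -/
theorem jensen_inequality_conditional_E_integral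
    {Ω Ω₁ Ω₂ Ω₃ : Type*} [MeasurableSpace Ω] [MeasurableSpace Ω₁] [MeasurableSpace Ω₂]
    [MeasurableSpace Ω₃]
    (P : Measure Ω) [IsProbabilityMeasure P]
    {X₁ : Ω → Ω₁} {X₂ : Ω → Ω₂} {X₃ : Ω → Ω₃}
    (hX₁ : Measurable X₁) (hX₂ : Measurable X₂) (hX₃ : Measurable X₃)
    (φ : ℝ → ℝ)
    (hφ : ∀ (x y t : ℝ), 0 ≤ t → t ≤ 1 →
      φ (t * x + (1 - t) * y) ≤ t * φ x + (1 - t) * φ y)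
    {A₃ : Set Ω₃} (hA₃ : MeasurableSet A₃) (hpos : 0 < P (X₃ ⁻¹' A₃))
    (K : Kernel Ω₁ Ω₂) [IsFiniteKernel K]
    (hK : ∀ (A₁ : Set Ω₁) (A₂ : Set Ω₂), MeasurableSet A₁ → MeasurableSet A₂ →
      ∫⁻ ω₁ in A₁, K ω₁ A₂ ∂((P.restrict (X₃ ⁻¹' A₃)).map X₁) =
        P (X₁ ⁻¹' A₁ ∩ X₂ ⁻¹' A₂ ∩ X₃ ⁻¹' A₃))
    (Y : Ω₂ → ℝ) (hY : Measurable Y)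
    (hYint : Integrable Y (P.map X₂)) (hφYint : Integrable (φ ∘ Y) (P.map X₂)) :
    ∀ᵐ ω₁ ∂((P.restrict (X₃ ⁻¹' A₃)).map X₁),
      IsProbabilityMeasure (K ω₁) ∧ Integrable Y (K ω₁) ∧ Integrable (φ ∘ Y) (K ω₁) ∧
        φ (∫ y, Y y ∂(K ω₁)) ≤ ∫ y, φ (Y y) ∂(K ω₁) := by
  set ν : Measure Ω₁ := (P.restrict (X₃ ⁻¹' A₃)).map X₁ with hν
  -- convexity and continuity of φ
  have hconv : ConvexOn ℝ Set.univ φ := by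
    refine ⟨convex_univ, fun x _ y _ a b ha hb hab => ?_⟩
    have := hφ x y a ha (by linarith)
    simpa [smul_eq_mul, show (1 : ℝ) - a = b by linarith] using this
  have hcont : Continuous φ := by
    rw [← continuousOn_univ]
    exact hconv.continuousOn isOpen_univ
  -- a.e. K ω₁ is a probability measure
  have h1 : ∀ᵐ ω₁ ∂ν, K ω₁ Set.univ = (1 : ℝ≥0∞) := by
    have : (fun ω₁ => K ω₁ Set.univ) =ᵐ[ν] (fun _ => (1 : ℝ≥0∞)) := by
      refine ae_eq_of_forall_setLIntegral_eq_of_sigmaFinite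
        (K.measurable_coe MeasurableSet.univ) measurable_const fun s hs _ => ?_
      rw [hK s Set.univ hs MeasurableSet.univ]
      rw [setLIntegral_const, one_mul, hν,
        Measure.map_apply hX₁ hs, Measure.restrict_apply (hX₁ hs)]
      simp
    exact this
  -- the composed measure is dominated by the law of X₂
  have hle : ν.bind (fun ω₁ => K ω₁) ≤ P.map X₂ := by
    rw [Measure.le_iff]
    intro s hs
    rw [Measure.bind_apply hs K.measurable.aemeasurable, Measure.map_apply hX₂ hs]
    have := hK Set.univ s MeasurableSet.univ hs
    simp only [Set.preimage_univ, Set.univ_inter] at this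
    rw [setLIntegral_univ] at this
    rw [this]
    exact measure_mono Set.inter_subset_left
  -- generic finiteness of sections
  have key : ∀ g : Ω₂ → ℝ, Measurable g → Integrable g (P.map X₂) →
      ∀ᵐ ω₁ ∂ν, ∫⁻ ω₂, ‖g ω₂‖₊ ∂(K ω₁) < ∞ := by
    intro g hg hgint
    have hgm : Measurable fun ω₂ => (‖g ω₂‖₊ : ℝ≥0∞) := hg.nnnorm.coe_nnreal_ennreal
    have hmeas : Measurable fun ω₁ => ∫⁻ ω₂, ‖g ω₂‖₊ ∂(K ω₁) :=
      Measurable.lintegral_kernel hgm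
    have hfin : ∫⁻ ω₁, ∫⁻ ω₂, ‖g ω₂‖₊ ∂(K ω₁) ∂ν < ∞ := by
      rw [← Measure.lintegral_bind K.measurable.aemeasurable hgm.aemeasurable]
      calc ∫⁻ ω₂, ‖g ω₂‖₊ ∂(ν.bind (fun ω₁ => K ω₁)) ≤ ∫⁻ ω₂, ‖g ω₂‖₊ ∂(P.map X₂) :=
            lintegral_mono' hle le_rfl
        _ < ∞ := hgint.2
    exact ae_lt_top hmeas hfin.ne
  have h2 := key Y hY hYint
  have h3 := key (φ ∘ Y) (hcont.measurable.comp hY) hφYint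
  filter_upwards [h1, h2, h3] with ω₁ h1 h2 h3
  haveI : IsProbabilityMeasure (K ω₁) := ⟨h1⟩
  have hYi : Integrable Y (K ω₁) := ⟨hY.aestronglyMeasurable, h2⟩
  have hφYi : Integrable (φ ∘ Y) (K ω₁) :=
    ⟨(hcont.measurable.comp hY).aestronglyMeasurable, h3⟩
  refine ⟨inferInstance, hYi, hφYi, ?_⟩
  have := hconv.map_integral_le (hcont.continuousOn) isClosed_univ
    (Filter.Eventually.of_forall fun _ => Set.mem_univ _) hYi hφYi
  simpa [Function.comp] using this
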